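/- For every integer m ≥ 3 one has the ratio bounds ω_{m−1}/ω_{m−2} ≥ σ_{m−1} and σ_{m−1} > (((1−α)/(2α))·(m−2)) / ((m−1)/α − α), where in particular ω_{m−2} ≠ 0. -/

import Mathlib

/-- The SFTR-1/2 weights `ω_m`. -/
noncomputable def sftrW (α : ℝ) : ℕ → ℝ
  | 0 => (2 * α / (α + 1)) ^ α
  | 1 => -α * (2 * α / (α + 1)) ^ (α + 1)
  | (m + 2) =>
      2 * α / (((m : ℝ) + 2) * (α + 1)) *
        (((((m : ℝ) + 2) - 1) / α - α) * sftrW α (m + 1) +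
          (α - 1) / (2 * α) * (((m : ℝ) + 2) - 2) * sftrW α m)

/-- `σ_m` from the paper. -/
noncomputable def sigmaW (α : ℝ) (m : ℕ) : ℝ :=
  (1 - α) / (2 * α) * ((m : ℝ) - 1) / ((m : ℝ) / α - α) * (2 / (1 + α)) * (1 + 1 / (m : ℝ))

lemma sftrW_rec (α : ℝ) (k : ℕ) : sftrW α (k+2) =
    2 * α / (((k : ℝ) + 2) * (α + 1)) *
        (((((k : ℝ) + 2) - 1) / α - α) * sftrW α (k + 1) +
          (α - 1) / (2 * α) * (((k : ℝ) + 2) - 2) * sftrW α k) := rfl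

lemma poly_ineq (α n : ℝ) (h0 : 0 < α) (h1 : α < 1) (hn : 1 ≤ n) :
    (1-α)*(n+1)*(n+3)*(n+2) ≤ (n+1-α^2)*((n+1)*(1-α)+2)*(n+2-α^2) := by
  have key : (n+1-α^2)*((n+1)*(1-α)+2)*(n+2-α^2) - (1-α)*(n+1)*(n+3)*(n+2)
      = α*(2*((1-α)*(6-4*α+α^2)+α^3*(3-α))
          + (n-1)*(2*(1-α+α^2)*(n+3)+(2-5*α+α^2+α^3-α^4))) := by ring
  have h2 : 0 ≤ (1-α)*(6-4*α+α^2)+α^3*(3-α) := by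
    have a1 : 0 ≤ (1-α)*(6-4*α+α^2) := by
      apply mul_nonneg (by linarith); nlinarith [sq_nonneg (α-2)]
    have a2 : 0 ≤ α^3*(3-α) := by
      apply mul_nonneg (by positivity); linarith
    linarith
  have h3 : 0 ≤ 2*(1-α+α^2)*(n+3)+(2-5*α+α^2+α^3-α^4) := by
    have t1 : 0 ≤ (n-1)*(1-α+α^2) := by
      apply mul_nonneg (by linarith); nlinarith [sq_nonneg (2*α-1)]
    have t2 : 0 ≤ (18*α-13)^2 := sq_nonneg _
    have t3 : 0 ≤ α^3*(1-α) := by apply mul_nonneg (by positivity); linarith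
    nlinarith [t1, t2, t3]
  have h4 : 0 ≤ (n-1)*(2*(1-α+α^2)*(n+3)+(2-5*α+α^2+α^3-α^4)) :=
    mul_nonneg (by linarith) h3
  have h5 : 0 ≤ α*(2*((1-α)*(6-4*α+α^2)+α^3*(3-α))
      + (n-1)*(2*(1-α+α^2)*(n+3)+(2-5*α+α^2+α^3-α^4))) :=
    mul_nonneg h0.le (by linarith)
  linarith [key, h5]

lemma sigmaW_closed (α : ℝ) (h0 : 0 < α) (h1 : α < 1) (k : ℕ) (hk : 1 ≤ k) :
    sigmaW α (k+1) = (1-α)*(k:ℝ)*((k:ℝ)+2) / (((k:ℝ)+1-α^2)*(1+α)*((k:ℝ)+1)) := by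
  have hn1 : (1:ℝ) ≤ (k:ℝ) := by exact_mod_cast hk
  have hα : α ≠ 0 := ne_of_gt h0
  have h1α : (1:ℝ) + α ≠ 0 := by positivity
  have hnp1 : (k:ℝ) + 1 ≠ 0 := by positivity
  have hd : (k:ℝ) + 1 - α^2 ≠ 0 := by nlinarith [sq_nonneg α]
  have hden : (((k:ℝ)+1) / α - α) = ((k:ℝ)+1-α^2)/α := by field_simp
  unfold sigmaW
  push_cast
  rw [hden]
  field_simp
  ring

lemma key_induct (α : ℝ) (h0 : 0 < α) (h1 : α < 1) :
    ∀ k : ℕ, 1 ≤ k → sftrW α k < 0 ∧ sftrW α (k+1) ≤ sigmaW α (k+1) * sftrW α k := by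
  have hα : α ≠ 0 := ne_of_gt h0
  have h1α : (0:ℝ) < 1 + α := by linarith
  intro k hk
  induction k, hk using Nat.le_induction with
  | base =>
    have hc : (0:ℝ) < 2 * α / (α + 1) := by positivity
    have hw1 : sftrW α 1 < 0 := by
      show -α * (2 * α / (α + 1)) ^ (α + 1) < 0
      have := Real.rpow_pos_of_pos hc (α + 1)
      nlinarith
    refine ⟨hw1, ?_⟩
    have hw2 : sftrW α 2 = (1 - α) * sftrW α 1 := by
      rw [show (2:ℕ) = 0 + 2 from rfl, sftrW_rec]
      push_cast
      field_simp
      ring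
    have hσ2 : sigmaW α 2 = 3*(1-α) / (2*(2-α^2)*(1+α)) := by
      have h2a : (2:ℝ)/α - α = (2-α^2)/α := by field_simp
      have hd : (2:ℝ) - α^2 ≠ 0 := by nlinarith
      unfold sigmaW
      push_cast
      rw [h2a]
      field_simp
      ring
    have hσle : sigmaW α 2 ≤ 1 - α := by
      rw [hσ2, div_le_iff₀ (by nlinarith)]
      have e1 : 0 ≤ α*(α+2)*(1-α) := by
        apply mul_nonneg (by positivity); linarith
      nlinarith [mul_nonneg (by linarith : (0:ℝ) ≤ 1-α) e1]
    rw [hw2]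
    exact mul_le_mul_of_nonpos_right hσle hw1.le
  | succ k hk ih =>
    obtain ⟨hwk, hrat⟩ := ih
    have hn : (1:ℝ) ≤ (k:ℝ) := by exact_mod_cast hk
    have hd1 : (0:ℝ) < (k:ℝ)+1-α^2 := by nlinarith
    have hd2 : (0:ℝ) < (k:ℝ)+2-α^2 := by nlinarith
    have hσ := sigmaW_closed α h0 h1 k hk
    have hσpos : 0 < sigmaW α (k+1) := by
      rw [hσ]
      apply div_pos
      · apply mul_pos (mul_pos (by linarith : (0:ℝ) < 1-α) (by linarith : (0:ℝ) < (k:ℝ))); linarith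
      · apply mul_pos (mul_pos hd1 h1α); linarith
    have hwk1 : sftrW α (k+1) < 0 :=
      lt_of_le_of_lt hrat (mul_neg_of_pos_of_neg hσpos hwk)
    refine ⟨hwk1, ?_⟩
    have hσ' : sigmaW α (k+2) =
        (1-α)*((k:ℝ)+1)*((k:ℝ)+3) / (((k:ℝ)+2-α^2)*(1+α)*((k:ℝ)+2)) := by
      have h := sigmaW_closed α h0 h1 (k+1) (by omega)
      rw [show k+1+1 = k+2 from rfl] at h
      rw [h]; push_cast; ring
    have hdiv : sftrW α (k+1) / sigmaW α (k+1) ≤ sftrW α k := by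
      rw [div_le_iff₀ hσpos]
      nlinarith [hrat]
    have hB : (α-1)/(2*α)*(((k:ℝ)+2)-2) ≤ 0 := by
      apply mul_nonpos_of_nonpos_of_nonneg
      · apply div_nonpos_of_nonpos_of_nonneg (by linarith) (by linarith)
      · linarith
    have hstep1 : (α-1)/(2*α)*(((k:ℝ)+2)-2) * sftrW α k ≤
        ((α-1)/(2*α)*(((k:ℝ)+2)-2)) * (sftrW α (k+1) / sigmaW α (k+1)) :=
      mul_le_mul_of_nonpos_left hdiv hB
    have hC : (0:ℝ) ≤ 2*α/(((k:ℝ)+2)*(α+1)) := by positivity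
    have hstep2 : sftrW α (k+2) ≤
        (2*α/(((k:ℝ)+2)*(α+1)) * ((((k:ℝ)+2)-1)/α - α
          + ((α-1)/(2*α)*(((k:ℝ)+2)-2)) / sigmaW α (k+1))) * sftrW α (k+1) := by
      rw [sftrW_rec]
      have expand : (2*α/(((k:ℝ)+2)*(α+1)) * ((((k:ℝ)+2)-1)/α - α
            + ((α-1)/(2*α)*(((k:ℝ)+2)-2)) / sigmaW α (k+1))) * sftrW α (k+1)
          = 2*α/(((k:ℝ)+2)*(α+1)) * (((((k:ℝ)+2)-1)/α - α) * sftrW α (k+1)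
            + ((α-1)/(2*α)*(((k:ℝ)+2)-2)) * (sftrW α (k+1) / sigmaW α (k+1))) := by
        ring
      rw [expand]
      exact mul_le_mul_of_nonneg_left (by linarith) hC
    have hcore : sigmaW α (k+2) ≤ 2*α/(((k:ℝ)+2)*(α+1)) * ((((k:ℝ)+2)-1)/α - α
          + ((α-1)/(2*α)*(((k:ℝ)+2)-2)) / sigmaW α (k+1)) := by
      have hCT : 2*α/(((k:ℝ)+2)*(α+1)) * ((((k:ℝ)+2)-1)/α - α
            + ((α-1)/(2*α)*(((k:ℝ)+2)-2)) / sigmaW α (k+1))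
          = ((k:ℝ)+1-α^2)*(((k:ℝ)+1)*(1-α)+2) / (((k:ℝ)+2)^2*(α+1)) := by
        rw [hσ]
        have l1 : (1:ℝ) - α ≠ 0 := by linarith
        have l2 : (k:ℝ) ≠ 0 := by positivity
        have l3 : (k:ℝ) + 2 ≠ 0 := by positivity
        have l4 : (k:ℝ) + 1 ≠ 0 := by positivity
        have l5 : (k:ℝ) + 1 - α^2 ≠ 0 := ne_of_gt hd1
        have l6 : (1:ℝ) + α ≠ 0 := ne_of_gt h1α
        field_simp
        ring
      rw [hCT, hσ']
      have hden1 : (0:ℝ) < ((k:ℝ)+2-α^2)*(1+α)*((k:ℝ)+2) := by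
        apply mul_pos (mul_pos hd2 h1α); linarith
      have hden2 : (0:ℝ) < ((k:ℝ)+2)^2*(α+1) := by positivity
      rw [div_le_div_iff₀ hden1 hden2]
      nlinarith [mul_le_mul_of_nonneg_right (poly_ineq α (k:ℝ) h0 h1 hn)
        (show (0:ℝ) ≤ ((k:ℝ)+2)*(1+α) by positivity)]
    exact le_trans hstep2 (mul_le_mul_of_nonpos_right hcore hwk1.le)

theorem sftrW_ratio_bounds (α : ℝ) (hα : α ∈ Set.Ioo (0 : ℝ) 1) :
    ∀ m : ℕ, 3 ≤ m →
      sftrW α (m - 2) ≠ 0 ∧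
      sigmaW α (m - 1) ≤ sftrW α (m - 1) / sftrW α (m - 2) ∧
      (1 - α) / (2 * α) * ((m : ℝ) - 2) / (((m : ℝ) - 1) / α - α) < sigmaW α (m - 1) := by
  obtain ⟨h0, h1⟩ := hα
  intro m hm
  have h2 : m - 2 + 1 = m - 1 := by omega
  have hk1 : 1 ≤ m - 2 := by omega
  obtain ⟨hneg, hle⟩ := key_induct α h0 h1 (m-2) hk1
  rw [h2] at hle
  have hx : (3:ℝ) ≤ (m:ℝ) := by exact_mod_cast hm
  refine ⟨ne_of_lt hneg, ?_, ?_⟩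
  · rw [le_div_iff_of_neg hneg]
    linarith [hle]
  · have hc : ((m-1:ℕ):ℝ) = (m:ℝ) - 1 := by
      have h1m : (1:ℕ) ≤ m := by omega
      push_cast [Nat.cast_sub h1m]
      ring
    unfold sigmaW
    rw [hc]
    have hda : ((m:ℝ)-1)/α - α = ((m:ℝ)-1-α^2)/α := by field_simp
    have hdpos : (0:ℝ) < ((m:ℝ)-1)/α - α := by
      rw [hda]; apply div_pos (by nlinarith) h0
    have hbase : 0 < (1-α)/(2*α)*((m:ℝ)-2)/(((m:ℝ)-1)/α-α) := by
      apply div_pos _ hdpos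
      apply mul_pos (div_pos (by linarith) (by linarith)) (by linarith)
    have hmult : 1 < (2/(1+α))*(1+1/((m:ℝ)-1)) := by
      have m1 : (1:ℝ) < 2/(1+α) := by
        rw [lt_div_iff₀ (by linarith)]; linarith
      have m2 : (0:ℝ) < 1/((m:ℝ)-1) := by apply div_pos one_pos; linarith
      nlinarith
    have hs : ((m:ℝ)-1)-1 = (m:ℝ)-2 := by ring
    rw [hs]
    have := mul_lt_mul_of_pos_left hmult hbase
    nlinarith [this]
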